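/- Let p ≥ 1 and let j, k ≥ 0 be integers with j + k ≤ p. Let T = T^p_{j,k} = { z ∈ ℂ^{p×p} : (z − zᴴ)/(2i) has type (j,k) }, i.e., the tube over the cone of hermitian matrices of type (j,k). Then: (a) for every g ∈ GL(p, ℂ) and every hermitian v ∈ ℂ^{p×p}, the affine map z ↦ g·z·gᴴ + v maps T bijectively onto T; and (b) these affine maps act transitively on T: for any z, z' ∈ T there exist g ∈ GL(p, ℂ) and a hermitian v with z' = g·z·gᴴ + v. In particular every tube T^p_{j,k} is affinely homogeneous. -/

import Mathlib

/-- A hermitian matrix `y` has type `(j,k)` if, counted with multiplicity,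
exactly `j` of its eigenvalues are positive and exactly `k` are negative. -/
noncomputable def hasType {p : ℕ} (y : Matrix (Fin p) (Fin p) ℂ) (j k : ℕ) : Prop :=
  ∃ hy : y.IsHermitian,
    (Finset.univ.filter fun i => 0 < hy.eigenvalues i).card = j ∧
    (Finset.univ.filter fun i => hy.eigenvalues i < 0).card = k


open Matrix Complex Finset

namespace Stmt16

variable {p : ℕ}


lemma quad (U : Matrix (Fin p) (Fin p) ℂ) (μ : Fin p → ℝ) (x : Fin p → ℂ) :
    star x ⬝ᵥ ((U * diagonal (Complex.ofReal ∘ μ) * Uᴴ) *ᵥ x)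
      = ((∑ i, μ i * Complex.normSq ((Uᴴ *ᵥ x) i) : ℝ) : ℂ) := by
  have h1 : (U * diagonal (Complex.ofReal ∘ μ) * Uᴴ) *ᵥ x
      = U *ᵥ (diagonal (Complex.ofReal ∘ μ) *ᵥ (Uᴴ *ᵥ x)) := by
    rw [← mulVec_mulVec, ← mulVec_mulVec]
  have h2 : star x ᵥ* U = star (Uᴴ *ᵥ x) := by
    rw [star_mulVec, conjTranspose_conjTranspose]
  rw [h1, dotProduct_mulVec, h2]
  set d := Uᴴ *ᵥ x with hd
  push_cast
  simp only [dotProduct, mulVec_diagonal, Pi.star_apply, Function.comp_apply]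
  congr 1
  funext i
  have : star (d i) * d i = (normSq (d i) : ℂ) := by
    rw [Complex.normSq_eq_conj_mul_self]; rfl
  rw [mul_comm (↑(μ i)) (d i), ← mul_assoc, this, mul_comm]


/-- congruation of the quadratic form -/
lemma conj_dot (g Y : Matrix (Fin p) (Fin p) ℂ) (x : Fin p → ℂ) :
    star x ⬝ᵥ ((g * Y * gᴴ) *ᵥ x) = star (gᴴ *ᵥ x) ⬝ᵥ (Y *ᵥ (gᴴ *ᵥ x)) := by
  rw [← mulVec_mulVec, ← mulVec_mulVec, dotProduct_mulVec,
    show star x ᵥ* g = star (gᴴ *ᵥ x) by rw [star_mulVec, conjTranspose_conjTranspose]]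

/-- extension by zero as a linear map -/
noncomputable def ext (μ : Fin p → ℝ) : ({i // 0 < μ i} → ℂ) →ₗ[ℂ] (Fin p → ℂ) where
  toFun c := fun i => if h : 0 < μ i then c ⟨i, h⟩ else 0
  map_add' a b := by funext i; by_cases h : 0 < μ i <;> simp [h]
  map_smul' r a := by funext i; by_cases h : 0 < μ i <;> simp [h]

lemma ext_apply_pos (μ : Fin p → ℝ) (c : {i // 0 < μ i} → ℂ) (i : {i // 0 < μ i}) :
    ext μ c i.val = c i := by simp [ext, i.2]

lemma ext_apply_neg (μ : Fin p → ℝ) (c : {i // 0 < μ i} → ℂ) (i : Fin p) (h : ¬ 0 < μ i) :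
    ext μ c i = 0 := by simp [ext, h]

set_option maxHeartbeats 1000000 in
/-- Core Sylvester inequality. -/
lemma card_pos_le (μ μ' : Fin p → ℝ) (U U' g g' : Matrix (Fin p) (Fin p) ℂ)
    (hU : Uᴴ * U = 1) (hgg' : g' * g = 1)
    (heq : g * (U * diagonal (Complex.ofReal ∘ μ) * Uᴴ) * gᴴ
      = U' * diagonal (Complex.ofReal ∘ μ') * U'ᴴ) :
    (univ.filter fun i => 0 < μ i).card ≤ (univ.filter fun i => 0 < μ' i).card := by
  by_contra hlt
  push_neg at hlt
  set L : ({i // 0 < μ i} → ℂ) →ₗ[ℂ] ({i // 0 < μ' i} → ℂ) :=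
    (LinearMap.funLeft ℂ ℂ Subtype.val) ∘ₗ (mulVecLin (U'ᴴ * g'ᴴ * U)) ∘ₗ ext μ with hL
  have hnotinj : ¬ Function.Injective L := by
    intro hinj
    have := LinearMap.finrank_le_finrank_of_injective hinj
    rw [Module.finrank_pi, Module.finrank_pi, Fintype.card_subtype, Fintype.card_subtype] at this
    omega
  rw [Function.not_injective_iff] at hnotinj
  obtain ⟨a, b, hab, hne⟩ := hnotinj
  have hc0 : a - b ≠ 0 := sub_ne_zero.mpr hne
  have hLc : L (a - b) = 0 := by rw [map_sub, hab, sub_self]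
  set c := a - b
  have hLc' : ∀ jh : {i // 0 < μ' i}, ((U'ᴴ * g'ᴴ * U) *ᵥ ext μ c) jh.val = 0 := by
    intro jh
    have h0 := congrFun hLc jh
    simpa only [hL, LinearMap.comp_apply, LinearMap.funLeft_apply, mulVecLin_apply,
      Pi.zero_apply] using h0
  set x : Fin p → ℂ := g'ᴴ *ᵥ (U *ᵥ ext μ c) with hx
  have hgx : gᴴ *ᵥ x = U *ᵥ ext μ c := by
    rw [hx, mulVec_mulVec, ← conjTranspose_mul, hgg', conjTranspose_one, one_mulVec]
  have hU'x : U'ᴴ *ᵥ x = (U'ᴴ * g'ᴴ * U) *ᵥ ext μ c := by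
    rw [hx, mulVec_mulVec, mulVec_mulVec]
  have e1 : star x ⬝ᵥ ((U' * diagonal (Complex.ofReal ∘ μ') * U'ᴴ) *ᵥ x)
      = ((∑ i, μ i * Complex.normSq (ext μ c i) : ℝ) : ℂ) := by
    rw [← heq, conj_dot, hgx, quad]
    norm_cast
    refine Finset.sum_congr rfl fun i _ => ?_
    rw [mulVec_mulVec, hU, one_mulVec]
  have e2 := quad U' μ' x
  have hSeq : (∑ i, μ i * Complex.normSq (ext μ c i))
      = ∑ i, μ' i * Complex.normSq ((U'ᴴ *ᵥ x) i) := by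
    exact_mod_cast e1.symm.trans e2
  have hS1 : 0 < ∑ i, μ i * Complex.normSq (ext μ c i) := by
    obtain ⟨i0, hi0⟩ : ∃ i0, c i0 ≠ 0 := by
      by_contra hall; push_neg at hall; exact hc0 (funext hall)
    refine Finset.sum_pos' (fun i _ => ?_) ⟨i0.val, Finset.mem_univ _, ?_⟩
    · by_cases h : 0 < μ i
      · exact mul_nonneg h.le (Complex.normSq_nonneg _)
      · rw [ext_apply_neg μ c i h]; simp
    · rw [ext_apply_pos μ c i0]
      exact mul_pos i0.2 (Complex.normSq_pos.mpr hi0)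
  have hS2 : (∑ i, μ' i * Complex.normSq ((U'ᴴ *ᵥ x) i)) ≤ 0 := by
    refine Finset.sum_nonpos fun i _ => ?_
    by_cases h : 0 < μ' i
    · have h0 : (U'ᴴ *ᵥ x) i = 0 := by rw [hU'x]; exact hLc' ⟨i, h⟩
      simp [h0]
    · exact mul_nonpos_of_nonpos_of_nonneg (le_of_not_gt h) (Complex.normSq_nonneg _)
  rw [hSeq] at hS1
  exact absurd (hS1.trans_le hS2) (lt_irrefl 0)

lemma cancel (g g' z : Matrix (Fin p) (Fin p) ℂ) (hgg' : g' * g = 1) :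
    g' * (g * z * gᴴ) * g'ᴴ = z := by
  have h2 : gᴴ * g'ᴴ = 1 := by rw [← conjTranspose_mul, hgg', conjTranspose_one]
  calc g' * (g * z * gᴴ) * g'ᴴ = (g' * g) * (z * (gᴴ * g'ᴴ)) := by
        simp only [Matrix.mul_assoc]
    _ = z := by rw [hgg', h2, Matrix.one_mul, Matrix.mul_one]



lemma imPart_isHermitian (z : Matrix (Fin p) (Fin p) ℂ) :
    ((2 * Complex.I)⁻¹ • (z - zᴴ)).IsHermitian := by
  have hc : star ((2 * Complex.I)⁻¹ : ℂ) = -(2 * Complex.I)⁻¹ := by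
    rw [star_inv₀]
    rw [Complex.star_def, _root_.map_mul, Complex.conj_I, Complex.conj_ofNat]
    rw [show (2 : ℂ) * -Complex.I = -(2 * Complex.I) by ring, inv_neg]
  show ((2 * Complex.I)⁻¹ • (z - zᴴ))ᴴ = _
  rw [conjTranspose_smul, conjTranspose_sub, conjTranspose_conjTranspose, hc,
    show zᴴ - z = -(z - zᴴ) from (neg_sub _ _).symm, neg_smul_neg]

lemma imPart_affine (g v z : Matrix (Fin p) (Fin p) ℂ) (hv : v.IsHermitian) :
    (2 * Complex.I)⁻¹ • ((g * z * gᴴ + v) - (g * z * gᴴ + v)ᴴ)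
      = g * ((2 * Complex.I)⁻¹ • (z - zᴴ)) * gᴴ := by
  have h1 : (g * z * gᴴ + v) - (g * z * gᴴ + v)ᴴ = g * (z - zᴴ) * gᴴ := by
    rw [conjTranspose_add, conjTranspose_mul, conjTranspose_mul,
      conjTranspose_conjTranspose, hv.eq, Matrix.mul_sub, Matrix.sub_mul]
    noncomm_ring
  rw [h1, Matrix.mul_smul, Matrix.smul_mul]


lemma decomp {y : Matrix (Fin p) (Fin p) ℂ} (hy : y.IsHermitian) :
    y = (hy.eigenvectorUnitary : Matrix (Fin p) (Fin p) ℂ)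
        * diagonal (Complex.ofReal ∘ hy.eigenvalues)
        * (hy.eigenvectorUnitary : Matrix (Fin p) (Fin p) ℂ)ᴴ := by
  have := hy.spectral_theorem
  rwa [Unitary.conjStarAlgAut_apply, star_eq_conjTranspose] at this

lemma unitary_hU {y : Matrix (Fin p) (Fin p) ℂ} (hy : y.IsHermitian) :
    (hy.eigenvectorUnitary : Matrix (Fin p) (Fin p) ℂ)ᴴ
      * (hy.eigenvectorUnitary : Matrix (Fin p) (Fin p) ℂ) = 1 := by
  rw [← star_eq_conjTranspose]
  exact Unitary.coe_star_mul_self hy.eigenvectorUnitary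

/-- every hermitian matrix is congruent to the diagonal matrix of eigenvalue signs -/
lemma exists_decomp_sign {y : Matrix (Fin p) (Fin p) ℂ} (hy : y.IsHermitian) :
    ∃ G G' : Matrix (Fin p) (Fin p) ℂ, G' * G = 1 ∧
      y = G * diagonal (Complex.ofReal ∘ fun i => Real.sign (hy.eigenvalues i)) * Gᴴ := by
  classical
  set lam := hy.eigenvalues
  set U : Matrix (Fin p) (Fin p) ℂ := (hy.eigenvectorUnitary : Matrix (Fin p) (Fin p) ℂ)
  set e : Fin p → ℝ := fun i => if lam i = 0 then 1 else Real.sqrt |lam i|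
  have he0 : ∀ i, e i ≠ 0 := by
    intro i
    by_cases h : lam i = 0
    · simp [e, h]
    · simp only [e, if_neg h]
      exact (Real.sqrt_pos.mpr (abs_pos.mpr h)).ne'
  have hese : ∀ i, e i * Real.sign (lam i) * e i = lam i := by
    intro i
    by_cases h : lam i = 0
    · simp [e, h, Real.sign_zero]
    · simp only [e, if_neg h]
      rw [mul_comm (Real.sqrt _) (Real.sign _), mul_assoc,
        Real.mul_self_sqrt (abs_nonneg _)]
      rcases lt_trichotomy (lam i) 0 with hr | hr | hr
      · rw [Real.sign_of_neg hr, abs_of_neg hr]; ring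
      · exact absurd hr h
      · rw [Real.sign_of_pos hr, abs_of_pos hr, one_mul]
  set E : Matrix (Fin p) (Fin p) ℂ := diagonal (Complex.ofReal ∘ e)
  have hEH : Eᴴ = E := by
    rw [diagonal_conjTranspose]
    refine congrArg diagonal (funext fun i => ?_)
    simp only [Pi.star_apply, Function.comp_apply, Complex.star_def, Complex.conj_ofReal]
  refine ⟨U * E, diagonal (Complex.ofReal ∘ fun i => (e i)⁻¹) * Uᴴ, ?_, ?_⟩
  · rw [Matrix.mul_assoc, ← Matrix.mul_assoc Uᴴ U E, unitary_hU hy, Matrix.one_mul,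
      diagonal_mul_diagonal]
    rw [← diagonal_one]
    refine congrArg diagonal (funext fun i => ?_)
    simp only [Function.comp_apply, Pi.mul_apply, Pi.one_apply]
    rw [← Complex.ofReal_mul, inv_mul_cancel₀ (he0 i), Complex.ofReal_one]
  · have hstep : E * diagonal (Complex.ofReal ∘ fun i => Real.sign (lam i)) * E
        = diagonal (Complex.ofReal ∘ lam) := by
      rw [diagonal_mul_diagonal, diagonal_mul_diagonal]
      refine congrArg diagonal (funext fun i => ?_)
      simp only [Function.comp_apply, Pi.mul_apply]
      rw [← Complex.ofReal_mul, ← Complex.ofReal_mul, hese i]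
    rw [conjTranspose_mul, hEH]
    calc y = U * diagonal (Complex.ofReal ∘ lam) * Uᴴ := decomp hy
      _ = U * (E * diagonal (Complex.ofReal ∘ fun i => Real.sign (lam i)) * E) * Uᴴ := by
          rw [hstep]
      _ = U * E * diagonal (Complex.ofReal ∘ fun i => Real.sign (lam i)) * (E * Uᴴ) := by
          simp only [Matrix.mul_assoc]

lemma sign_eq_one_iff (r : ℝ) : Real.sign r = 1 ↔ 0 < r := by
  constructor
  · intro h
    rcases lt_trichotomy r 0 with hr | hr | hr
    · rw [Real.sign_of_neg hr] at h; norm_num at h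
    · rw [hr, Real.sign_zero] at h; norm_num at h
    · exact hr
  · exact Real.sign_of_pos

lemma sign_eq_neg_one_iff (r : ℝ) : Real.sign r = -1 ↔ r < 0 := by
  constructor
  · intro h
    rcases lt_trichotomy r 0 with hr | hr | hr
    · exact hr
    · rw [hr, Real.sign_zero] at h; norm_num at h
    · rw [Real.sign_of_pos hr] at h; norm_num at h
  · exact Real.sign_of_neg

lemma card_parts (μ : Fin p → ℝ) :
    (univ.filter fun i => μ i = 0).card + (univ.filter fun i => 0 < μ i).card
      + (univ.filter fun i => μ i < 0).card = p := by
  classical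
  have h1 : (univ.filter fun i => 0 < μ i) ∪ (univ.filter fun i => μ i < 0)
      = univ.filter fun i => ¬ μ i = 0 := by
    ext i
    simp only [Finset.mem_union, Finset.mem_filter, Finset.mem_univ, true_and]
    constructor
    · rintro (h | h) h0 <;> simp [h0] at h
    · intro h
      rcases lt_trichotomy (μ i) 0 with hr | hr | hr
      · exact Or.inr hr
      · exact absurd hr h
      · exact Or.inl hr
  have h2 : Disjoint (univ.filter fun i => 0 < μ i) (univ.filter fun i => μ i < 0) := by
    rw [Finset.disjoint_filter]
    intro i _ h
    exact not_lt.mpr h.le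
  have h3 := Finset.card_filter_add_card_filter_not
    (s := (univ : Finset (Fin p))) (p := fun i => μ i = 0)
  have h4 := Finset.card_union_of_disjoint h2
  rw [h1] at h4
  simp only [Finset.card_univ, Fintype.card_fin] at h3
  omega

/-- match two functions with equal sign counts by a permutation -/
lemma exists_perm (lam lam' : Fin p → ℝ)
    (hpos : (univ.filter fun i => 0 < lam' i).card = (univ.filter fun i => 0 < lam i).card)
    (hneg : (univ.filter fun i => lam' i < 0).card = (univ.filter fun i => lam i < 0).card) :
    ∃ σ : Equiv.Perm (Fin p), ∀ i, Real.sign (lam' i) = Real.sign (lam (σ i)) := by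
  classical
  have hcard : ∀ s : ℝ, Fintype.card {i // Real.sign (lam' i) = s}
      = Fintype.card {i // Real.sign (lam i) = s} := by
    intro s
    rw [Fintype.card_subtype, Fintype.card_subtype]
    by_cases h1 : s = 1
    · subst h1
      rw [Finset.filter_congr (fun i _ => sign_eq_one_iff (lam' i)),
        Finset.filter_congr (fun i _ => sign_eq_one_iff (lam i))]
      exact hpos
    by_cases h2 : s = -1
    · subst h2
      rw [Finset.filter_congr (fun i _ => sign_eq_neg_one_iff (lam' i)),
        Finset.filter_congr (fun i _ => sign_eq_neg_one_iff (lam i))]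
      exact hneg
    by_cases h0 : s = 0
    · subst h0
      rw [Finset.filter_congr (fun i _ => @Real.sign_eq_zero_iff (lam' i)),
        Finset.filter_congr (fun i _ => @Real.sign_eq_zero_iff (lam i))]
      have c1 := card_parts lam
      have c2 := card_parts lam'
      omega
    · rw [Finset.filter_false_of_mem, Finset.filter_false_of_mem]
      · intro i _
        rcases Real.sign_apply_eq (lam i) with h | h | h <;> rw [h] <;>
          [exact fun hs => h2 hs.symm; exact fun hs => h0 hs.symm; exact fun hs => h1 hs.symm]
      · intro i _
        rcases Real.sign_apply_eq (lam' i) with h | h | h <;> rw [h] <;>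
          [exact fun hs => h2 hs.symm; exact fun hs => h0 hs.symm; exact fun hs => h1 hs.symm]
  set σ : Equiv.Perm (Fin p) :=
    ((Equiv.sigmaFiberEquiv (fun i => Real.sign (lam' i))).symm.trans
      (Equiv.sigmaCongrRight fun s => Fintype.equivOfCardEq (hcard s))).trans
      (Equiv.sigmaFiberEquiv (fun i => Real.sign (lam i))) with hσ
  refine ⟨σ, fun i => ?_⟩
  have : σ i = ((Fintype.equivOfCardEq (hcard (Real.sign (lam' i)))) ⟨i, rfl⟩).val := rfl
  rw [this]
  exact ((Fintype.equivOfCardEq (hcard (Real.sign (lam' i)))) ⟨i, rfl⟩).2.symm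

/-- permutation matrices -/
def permM (σ : Equiv.Perm (Fin p)) : Matrix (Fin p) (Fin p) ℂ :=
  Matrix.of fun i j => if σ i = j then 1 else 0

lemma permM_mul_diagonal (σ : Equiv.Perm (Fin p)) (d : Fin p → ℂ) :
    permM σ * diagonal d = Matrix.of fun i k => if σ i = k then d k else 0 := by
  ext i k
  rw [mul_diagonal]
  simp only [permM, of_apply, ite_mul, one_mul, zero_mul]

lemma permM_conj (σ : Equiv.Perm (Fin p)) (d : Fin p → ℂ) :
    permM σ * diagonal d * (permM σ)ᴴ = diagonal (fun i => d (σ i)) := by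
  classical
  ext i j
  rw [permM_mul_diagonal, mul_apply]
  rw [Finset.sum_eq_single (σ i)]
  · simp only [of_apply, if_pos rfl, conjTranspose_apply, permM]
    rcases eq_or_ne i j with rfl | hij
    · simp
    · rw [if_neg (fun h => hij (σ.injective h).symm), diagonal_apply_ne _ hij]
      simp
  · intro k _ hk
    rw [of_apply, if_neg (fun h => hk h.symm), zero_mul]
  · intro h
    exact absurd (Finset.mem_univ _) h

lemma permM_unit (σ : Equiv.Perm (Fin p)) : (permM σ)ᴴ * permM σ = 1 := by
  classical
  ext i j
  rw [mul_apply, Finset.sum_eq_single (σ.symm i)]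
  · simp only [conjTranspose_apply, permM, of_apply, Equiv.apply_symm_apply, if_pos rfl,
      star_one, one_mul, Matrix.one_apply]
    rcases eq_or_ne i j with rfl | hij
    · simp
    · simp
  · intro k _ hk
    rw [conjTranspose_apply, permM, of_apply,
      if_neg (fun h => hk (by rw [← h, Equiv.symm_apply_apply])), star_zero, zero_mul]
  · intro h
    exact absurd (Finset.mem_univ _) h

lemma hasType_congr {j k : ℕ} {y g g' : Matrix (Fin p) (Fin p) ℂ}
    (hgg' : g' * g = 1) (h : hasType y j k) : hasType (g * y * gᴴ) j k := by
  obtain ⟨hy, hj, hk⟩ := h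
  have hy' : (g * y * gᴴ).IsHermitian := isHermitian_mul_mul_conjTranspose g hy
  refine ⟨hy', ?_, ?_⟩
  · -- positive count
    have h1 := card_pos_le hy.eigenvalues hy'.eigenvalues _ _ g g'
      (unitary_hU hy) hgg' (by rw [← decomp hy, ← decomp hy'])
    have h2 := card_pos_le hy'.eigenvalues hy.eigenvalues _ _ g' g
      (unitary_hU hy') (mul_eq_one_comm.mp hgg')
      (by rw [← decomp hy, ← decomp hy']; exact cancel g g' y hgg')
    omega
  · -- negative count
    have hneg : ∀ (w : Matrix (Fin p) (Fin p) ℂ) (hw : w.IsHermitian) (V : Matrix (Fin p) (Fin p) ℂ),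
        w = V * diagonal (Complex.ofReal ∘ hw.eigenvalues) * Vᴴ →
        -w = V * diagonal (Complex.ofReal ∘ fun i => -hw.eigenvalues i) * Vᴴ := by
      intro w hw V hV
      have : diagonal (Complex.ofReal ∘ fun i => -hw.eigenvalues i)
          = -diagonal (Complex.ofReal ∘ hw.eigenvalues) := by
        ext i j
        rcases eq_or_ne i j with rfl | hij
        · simp [Function.comp]
        · simp [diagonal_apply_ne _ hij, hij]
      rw [this, Matrix.mul_neg, Matrix.neg_mul, ← hV]
    have hd := hneg y hy _ (decomp hy)
    have hd' := hneg (g * y * gᴴ) hy' _ (decomp hy')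
    have h1 := card_pos_le (fun i => -hy.eigenvalues i) (fun i => -hy'.eigenvalues i) _ _ g g'
      (unitary_hU hy) hgg'
      (by rw [← hd, ← hd']; rw [Matrix.mul_neg, Matrix.neg_mul])
    have h2 := card_pos_le (fun i => -hy'.eigenvalues i) (fun i => -hy.eigenvalues i) _ _ g' g
      (unitary_hU hy') (mul_eq_one_comm.mp hgg')
      (by rw [← hd, ← hd', Matrix.mul_neg, Matrix.neg_mul, neg_inj]
          exact cancel g g' y hgg')
    have hrw : ∀ (μ : Fin p → ℝ), (univ.filter fun i => 0 < -μ i).card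
        = (univ.filter fun i => μ i < 0).card := by
      intro μ; congr 1; apply Finset.filter_congr; intro i _; simp [neg_pos]
    rw [hrw] at h1 h2
    rw [hrw] at h1 h2
    omega


lemma conjT_conj (g z : Matrix (Fin p) (Fin p) ℂ) :
    (g * z * gᴴ)ᴴ = g * zᴴ * gᴴ := by
  rw [conjTranspose_mul, conjTranspose_mul, conjTranspose_conjTranspose, Matrix.mul_assoc]

lemma mapsTo_lemma {j k : ℕ} (g g' v : Matrix (Fin p) (Fin p) ℂ)
    (hgg' : g' * g = 1) (hv : v.IsHermitian) {z : Matrix (Fin p) (Fin p) ℂ}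
    (hz : hasType ((2 * Complex.I)⁻¹ • (z - zᴴ)) j k) :
    hasType ((2 * Complex.I)⁻¹ • ((g * z * gᴴ + v) - (g * z * gᴴ + v)ᴴ)) j k := by
  rw [imPart_affine g v z hv]
  exact hasType_congr hgg' hz

end Stmt16

/-- Let `T = T^p_{j,k}` be the tube of all `z ∈ ℂ^{p×p}` whose
hermitian imaginary part `(z − zᴴ)/(2i)` has type `(j,k)`. Then (a) for every
invertible `g` and hermitian `v` the affine map `z ↦ g·z·gᴴ + v` maps `T`
bijectively onto `T`, and (b) these maps act transitively on `T`; in particular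
`T` is affinely homogeneous. -/
theorem stmt_16 {p : ℕ} (hp : 1 ≤ p) (j k : ℕ) (hjk : j + k ≤ p) :
    let T : Set (Matrix (Fin p) (Fin p) ℂ) :=
      {z | hasType ((2 * Complex.I)⁻¹ • (z - z.conjTranspose)) j k}
    (∀ g : Matrix (Fin p) (Fin p) ℂ, IsUnit g →
      ∀ v : Matrix (Fin p) (Fin p) ℂ, v.IsHermitian →
        Set.BijOn (fun z => g * z * g.conjTranspose + v) T T) ∧
    (∀ z ∈ T, ∀ z' ∈ T, ∃ g : Matrix (Fin p) (Fin p) ℂ, IsUnit g ∧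
      ∃ v : Matrix (Fin p) (Fin p) ℂ, v.IsHermitian ∧
        z' = g * z * g.conjTranspose + v) := by
  intro T
  have memT : ∀ z : Matrix (Fin p) (Fin p) ℂ,
      z ∈ T ↔ hasType ((2 * Complex.I)⁻¹ • (z - zᴴ)) j k := fun z => Iff.rfl
  constructor
  · -- part (a)
    intro g hg v hv
    have hdet : IsUnit g.det := (Matrix.isUnit_iff_isUnit_det g).mp hg
    have hg' : g⁻¹ * g = 1 := Matrix.nonsing_inv_mul g hdet
    have hgg : g * g⁻¹ = 1 := mul_eq_one_comm.mp hg'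
    refine ⟨fun z hz => ?_, fun z1 h1 z2 h2 heq => ?_, fun w hw => ?_⟩
    · rw [memT] at hz ⊢
      exact Stmt16.mapsTo_lemma g g⁻¹ v hg' hv hz
    · simp only at heq
      have h3 : g * z1 * gᴴ = g * z2 * gᴴ := add_right_cancel heq
      calc z1 = g⁻¹ * (g * z1 * gᴴ) * (g⁻¹)ᴴ := (Stmt16.cancel g g⁻¹ z1 hg').symm
        _ = g⁻¹ * (g * z2 * gᴴ) * (g⁻¹)ᴴ := by rw [h3]
        _ = z2 := Stmt16.cancel g g⁻¹ z2 hg'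
    · refine ⟨g⁻¹ * (w - v) * (g⁻¹)ᴴ, ?_, ?_⟩
      · rw [memT] at hw ⊢
        have hsplit : g⁻¹ * (w - v) * (g⁻¹)ᴴ
            = g⁻¹ * w * (g⁻¹)ᴴ + -(g⁻¹ * v * (g⁻¹)ᴴ) := by
          rw [Matrix.mul_sub, Matrix.sub_mul, sub_eq_add_neg]
        rw [hsplit]
        exact Stmt16.mapsTo_lemma g⁻¹ g (-(g⁻¹ * v * (g⁻¹)ᴴ)) hgg
          ((Matrix.isHermitian_mul_mul_conjTranspose g⁻¹ hv).neg) hw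
      · simp only
        rw [Stmt16.cancel g⁻¹ g (w - v) hgg, sub_add_cancel]
  · -- part (b)
    intro z hz z' hz'
    rw [memT] at hz hz'
    obtain ⟨hy, hj, hk⟩ := hz
    obtain ⟨hy', hj', hk'⟩ := hz'
    obtain ⟨G, G', hGG', hdec⟩ := Stmt16.exists_decomp_sign hy
    obtain ⟨G₁, G₁', hG₁G₁', hdec'⟩ := Stmt16.exists_decomp_sign hy'
    obtain ⟨σ, hσ⟩ := Stmt16.exists_perm hy.eigenvalues hy'.eigenvalues
      (hj'.trans hj.symm) (hk'.trans hk.symm)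
    have hP : diagonal (Complex.ofReal ∘ fun i => Real.sign (hy'.eigenvalues i))
        = Stmt16.permM σ * diagonal (Complex.ofReal ∘ fun i => Real.sign (hy.eigenvalues i))
          * (Stmt16.permM σ)ᴴ := by
      rw [Stmt16.permM_conj]
      exact congrArg diagonal (funext fun i => by
        simp only [Function.comp_apply]
        rw [hσ i])
    have hD : G' * ((2 * Complex.I)⁻¹ • (z - zᴴ)) * G'ᴴ
        = diagonal (Complex.ofReal ∘ fun i => Real.sign (hy.eigenvalues i)) := by
      conv_lhs => rw [hdec]
      exact Stmt16.cancel G G' _ hGG'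
    set g0 : Matrix (Fin p) (Fin p) ℂ := G₁ * Stmt16.permM σ * G' with hg0
    have key : (2 * Complex.I)⁻¹ • (z' - z'ᴴ)
        = g0 * ((2 * Complex.I)⁻¹ • (z - zᴴ)) * g0ᴴ := by
      calc (2 * Complex.I)⁻¹ • (z' - z'ᴴ)
          = G₁ * diagonal (Complex.ofReal ∘ fun i => Real.sign (hy'.eigenvalues i)) * G₁ᴴ :=
            hdec'
        _ = G₁ * (Stmt16.permM σ
              * (G' * ((2 * Complex.I)⁻¹ • (z - zᴴ)) * G'ᴴ) * (Stmt16.permM σ)ᴴ) * G₁ᴴ := by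
            rw [hD, ← hP]
        _ = g0 * ((2 * Complex.I)⁻¹ • (z - zᴴ)) * g0ᴴ := by
            rw [hg0]
            simp only [conjTranspose_mul, Matrix.mul_assoc]
    have hunit : IsUnit g0 := by
      have hu1 : IsUnit G₁ := ⟨⟨G₁, G₁', mul_eq_one_comm.mp hG₁G₁', hG₁G₁'⟩, rfl⟩
      have hu2 : IsUnit (Stmt16.permM σ) :=
        ⟨⟨Stmt16.permM σ, (Stmt16.permM σ)ᴴ,
          mul_eq_one_comm.mp (Stmt16.permM_unit σ), Stmt16.permM_unit σ⟩, rfl⟩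
      have hu3 : IsUnit G' := ⟨⟨G', G, mul_eq_one_comm.mp ?_, ?_⟩, rfl⟩
      · exact (hu1.mul hu2).mul hu3
      · exact mul_eq_one_comm.mp hGG'
      · exact mul_eq_one_comm.mp hGG'
    have hzz : z' - z'ᴴ = g0 * (z - zᴴ) * g0ᴴ := by
      have hc2 : ((2 * Complex.I)⁻¹ : ℂ) ≠ 0 := by
        simp [Complex.I_ne_zero]
      have hkey2 := key
      rw [Matrix.mul_smul, Matrix.smul_mul] at hkey2
      exact smul_right_injective (Matrix (Fin p) (Fin p) ℂ) hc2 hkey2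
    refine ⟨g0, hunit, z' - g0 * z * g0ᴴ, ?_, ?_⟩
    · show (z' - g0 * z * g0ᴴ)ᴴ = z' - g0 * z * g0ᴴ
      have h5 : z'ᴴ = z' - g0 * (z - zᴴ) * g0ᴴ := by rw [← hzz]; abel
      rw [conjTranspose_sub, Stmt16.conjT_conj, h5, Matrix.mul_sub, Matrix.sub_mul]
      abel
    · rw [add_sub_cancel]
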